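/- Fix k ≥ 1 and γ ∈ (0, 1 − 1/n). Suppose that for every s ∈ {1,…,k} the error satisfies 0 < ε_s ≤ 1 − 1/n − γ and α_s is given by the formula α_s = (1/(2(n−1)))·log((n−1)(1−ε_s)/ε_s). Then ρ := −log φ(1 − 1/n − γ) > 0 and the d_1-probability of misclassification-relevant points satisfies Σ_{p ∈ P : Ψ^k_{y(p)}(p) ≤ 0} d_1(p) ≤ e^{−ρ·k}. -/

import Mathlib

open Finset

noncomputable section

variable {P A : Type*}

/-- The multiplicative weight factor `exp(−α·[(n−1)·𝟙(h(p)=y(p)) − 𝟙(h(p)≠y(p))])`. -/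
def wfac [DecidableEq A] (n : ℕ) (αs : ℝ) (hs y : P → A) (p : P) : ℝ :=
  Real.exp (-(αs * (((n : ℝ) - 1) * (if hs p = y p then 1 else 0) -
    (if hs p = y p then 0 else 1))))

/-- The weight sequence: `dseq n α h y s` is the distribution `d_s` (for `s ≥ 1`),
with `d_1` uniform and `d_{s+1}(p) = d_s(p)·wfac(α_s,h_s)(p) / Z_s`. -/
def dseq [Fintype P] [DecidableEq A] (n : ℕ) (α : ℕ → ℝ) (h : ℕ → P → A) (y : P → A) :
    ℕ → P → ℝ
  | 0 => fun _ => 1 / (Fintype.card P : ℝ)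
  | 1 => fun _ => 1 / (Fintype.card P : ℝ)
  | (s + 2) => fun p =>
      dseq n α h y (s + 1) p * wfac n (α (s + 1)) (h (s + 1)) y p /
        ∑ q, dseq n α h y (s + 1) q * wfac n (α (s + 1)) (h (s + 1)) y q

/-- The normalizer `Z_s = Σ_p d_s(p)·exp(−α_s·[(n−1)·𝟙(h_s(p)=y(p)) − 𝟙(h_s(p)≠y(p))])`. -/
def Zseq [Fintype P] [DecidableEq A] (n : ℕ) (α : ℕ → ℝ) (h : ℕ → P → A) (y : P → A)
    (s : ℕ) : ℝ :=
  ∑ q, dseq n α h y s q * wfac n (α s) (h s) y q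

/-- `F^k_a(p) = Σ_{s=1}^k α_s·𝟙[h_s(p)=a]`. -/
def Fsc [DecidableEq A] (α : ℕ → ℝ) (h : ℕ → P → A) (k : ℕ) (a : A) (p : P) : ℝ :=
  ∑ s ∈ Finset.Icc 1 k, α s * (if h s p = a then 1 else 0)

/-- `Ψ^k_a(p) = (n−1)·F^k_a(p) − Σ_{a'≠a} F^k_{a'}(p)` where `n = |A|`. -/
def Psi [Fintype A] [DecidableEq A] (α : ℕ → ℝ) (h : ℕ → P → A) (k : ℕ) (a : A) (p : P) : ℝ :=
  ((Fintype.card A : ℝ) - 1) * Fsc α h k a p - ∑ a' ∈ Finset.univ.erase a, Fsc α h k a' p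

/-- The error `ε_s = Σ_{p : h_s(p)≠y(p)} d_s(p)`. -/
def err [Fintype P] [DecidableEq A] (n : ℕ) (α : ℕ → ℝ) (h : ℕ → P → A) (y : P → A)
    (s : ℕ) : ℝ :=
  ∑ p ∈ Finset.univ.filter (fun p => h s p ≠ y p), dseq n α h y s p

/-- `φ(ε) = (n−1)^{−1/2}·ε^{1/2}·(1−ε)^{1/2}
      + (n−1)^{1/(2(n−1))}·(1−ε)^{1/(2(n−1))}·ε^{1−1/(2(n−1))}`. -/
def phi (n : ℕ) (ε : ℝ) : ℝ :=
  ((n : ℝ) - 1) ^ (-(1 / 2) : ℝ) * ε ^ ((1 : ℝ) / 2) * (1 - ε) ^ ((1 : ℝ) / 2) +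
    ((n : ℝ) - 1) ^ (1 / (2 * ((n : ℝ) - 1))) * (1 - ε) ^ (1 / (2 * ((n : ℝ) - 1))) *
      ε ^ (1 - 1 / (2 * ((n : ℝ) - 1)))



/-! ### Auxiliary real-analysis lemmas -/

/-- auxiliary: `g(m, ε, a) = (1-ε)e^{-ma} + ε e^a`. -/
def gfun (m ε a : ℝ) : ℝ := (1 - ε) * Real.exp (-(m * a)) + ε * Real.exp a

/-- auxiliary: the SAMME step size. -/
def Aval (m ε : ℝ) : ℝ := 1 / (2 * m) * Real.log (m * (1 - ε) / ε)

lemma bern {m : ℕ} (hm : 1 ≤ m) {u : ℝ} (hu : 1 ≤ u) :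
    u ^ ((1 : ℝ) / m) ≤ 1 + (u - 1) / m := by
  have hm' : (0:ℝ) < m := by exact_mod_cast hm
  have ht : (0:ℝ) ≤ (u - 1) / m := div_nonneg (by linarith) hm'.le
  have h1 : u ≤ (1 + (u - 1) / m) ^ m := by
    have := one_add_mul_le_pow (a := (u - 1) / m) (by linarith) m
    have : 1 + (m : ℝ) * ((u - 1) / m) ≤ (1 + (u - 1) / m) ^ m := this
    have he : (m : ℝ) * ((u - 1) / m) = u - 1 := by field_simp
    rw [he] at this; linarith
  calc u ^ ((1:ℝ)/m) ≤ ((1 + (u - 1) / m) ^ m) ^ ((1:ℝ)/m) :=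
        Real.rpow_le_rpow (by linarith) h1 (by positivity)
    _ = (1 + (u - 1) / m) ^ ((m : ℝ) * ((1:ℝ)/m)) := by
        rw [← Real.rpow_natCast (1 + (u - 1) / m) m, ← Real.rpow_mul (by linarith)]
    _ = 1 + (u - 1) / m := by
        rw [mul_one_div, div_self (ne_of_gt hm'), Real.rpow_one]

lemma keylt {m : ℕ} (hm : 1 ≤ m) {r : ℝ} (hr : 1 < r) :
    r ^ ((1 : ℝ) / 2) + m * r ^ (1 / (2 * (m : ℝ))) < m + r := by
  have hm' : (0:ℝ) < m := by exact_mod_cast hm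
  have hr0 : (0:ℝ) < r := by linarith
  set u : ℝ := r ^ ((1:ℝ)/2) with hu
  have hu1 : 1 < u := by
    rw [hu]
    calc (1:ℝ) = 1 ^ ((1:ℝ)/2) := (Real.one_rpow _).symm
    _ < r ^ ((1:ℝ)/2) := Real.rpow_lt_rpow (by norm_num) hr (by norm_num)
  have huu : u * u = r := by
    rw [hu, ← Real.rpow_add hr0]; norm_num
  have hpow : r ^ (1 / (2 * (m:ℝ))) = u ^ ((1:ℝ)/m) := by
    rw [hu, ← Real.rpow_mul (le_of_lt hr0)]
    congr 1
    field_simp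
  have hb : u ^ ((1:ℝ)/m) ≤ 1 + (u - 1)/m := bern hm (le_of_lt hu1)
  have : (m:ℝ) * (u ^ ((1:ℝ)/m)) ≤ m + (u - 1) := by
    have := mul_le_mul_of_nonneg_left hb (le_of_lt hm')
    have he : (m:ℝ) * (1 + (u-1)/m) = m + (u - 1) := by field_simp
    linarith [he ▸ this]
  rw [hpow]
  nlinarith [hu1, huu]

lemma g_mono {m : ℝ} (hm : 1 ≤ m) {ε εb : ℝ} (h0 : 0 < ε) (hle : ε ≤ εb)
    (hub : εb < m / (m + 1)) :
    gfun m ε (Aval m ε) ≤ gfun m εb (Aval m εb) := by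
  have hm0 : 0 < m := by linarith
  have hεb1 : εb < 1 := lt_of_lt_of_le hub (by
    rw [div_le_one (by linarith)]; linarith)
  have hε1 : ε < 1 := lt_of_le_of_lt hle hεb1
  have hεb0 : 0 < εb := lt_of_lt_of_le h0 hle
  set r : ℝ := m * (1 - ε) / ε with hr_def
  set rb : ℝ := m * (1 - εb) / εb with hrb_def
  have hrb1 : 1 < rb := by
    rw [hrb_def, lt_div_iff₀ hεb0]
    have h := (lt_div_iff₀ (by linarith : (0:ℝ) < m + 1)).mp hub
    nlinarith
  have hrble : rb ≤ r := by
    rw [hr_def, hrb_def, div_le_div_iff₀ hεb0 h0]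
    nlinarith
  have hr1 : 1 < r := lt_of_lt_of_le hrb1 hrble
  have hr0 : (0:ℝ) < r := by linarith
  have hrb0 : (0:ℝ) < rb := by linarith
  set a : ℝ := Aval m ε with ha_def
  set β : ℝ := Aval m εb with hβ_def
  have hβ0 : 0 ≤ β := by
    rw [hβ_def, Aval]
    have := Real.log_nonneg hrb1.le
    positivity
  have haβ : β ≤ a := by
    rw [ha_def, hβ_def, Aval, Aval]
    have := Real.log_le_log hrb0 hrble
    have h2m : (0:ℝ) < 1/(2*m) := by positivity
    nlinarith
  have ha0 : 0 ≤ a := le_trans hβ0 haβ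
  have hexp2ma : Real.exp (2 * m * a) = r := by
    rw [ha_def, Aval]
    rw [show 2 * m * (1 / (2*m) * Real.log r) = Real.log r by field_simp]
    exact Real.exp_log hr0
  have key1 : ε * Real.exp a ≤ m * (1 - ε) * Real.exp (-(m * a)) := by
    have h1 : Real.exp ((m+1) * a) ≤ r := by
      rw [← hexp2ma]
      exact Real.exp_le_exp.mpr (by nlinarith)
    have h2 : ε * Real.exp ((m+1)*a) ≤ m * (1-ε) := by
      have := mul_le_mul_of_nonneg_left h1 h0.le
      rw [hr_def] at this
      calc ε * Real.exp ((m+1)*a) ≤ ε * (m * (1-ε)/ε) := this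
        _ = m * (1-ε) := by field_simp
    have h3 : Real.exp ((m+1)*a) * Real.exp (-(m*a)) = Real.exp a := by
      rw [← Real.exp_add]; ring_nf
    have hem := Real.exp_pos (-(m*a))
    calc ε * Real.exp a = ε * Real.exp ((m+1)*a) * Real.exp (-(m*a)) := by
          rw [mul_assoc, h3]
      _ ≤ m * (1-ε) * Real.exp (-(m*a)) := by
          apply mul_le_mul_of_nonneg_right h2 hem.le
  have step1 : gfun m ε a ≤ gfun m ε β := by
    have k2 : Real.exp a - Real.exp β ≤ (a - β) * Real.exp a := by
      have := Real.add_one_le_exp (β - a)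
      have hea := Real.exp_pos a
      have : (β - a + 1) * Real.exp a ≤ Real.exp (β - a) * Real.exp a :=
        mul_le_mul_of_nonneg_right this hea.le
      rw [← Real.exp_add] at this
      ring_nf at this ⊢
      nlinarith [this]
    have k3 : (m*a - m*β) * Real.exp (-(m*a)) ≤ Real.exp (-(m*β)) - Real.exp (-(m*a)) := by
      have := Real.add_one_le_exp (m*a - m*β)
      have hea := Real.exp_pos (-(m*a))
      have : (m*a - m*β + 1) * Real.exp (-(m*a)) ≤ Real.exp (m*a - m*β) * Real.exp (-(m*a)) :=
        mul_le_mul_of_nonneg_right this hea.le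
      rw [← Real.exp_add] at this
      ring_nf at this ⊢
      nlinarith [this]
    have hab : 0 ≤ a - β := by linarith
    rw [gfun, gfun]
    nlinarith [mul_le_mul_of_nonneg_left k2 h0.le,
      mul_le_mul_of_nonneg_left k3 (by linarith : (0:ℝ) ≤ 1 - ε),
      mul_le_mul_of_nonneg_left key1 hab]
  have step2 : gfun m ε β ≤ gfun m εb β := by
    rw [gfun, gfun]
    have : Real.exp (-(m*β)) ≤ Real.exp β := Real.exp_le_exp.mpr (by nlinarith)
    nlinarith [this, hle]
  exact le_trans step1 step2

/-- `g` at the SAMME step size, in `rpow` form. -/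
lemma g_rpow {m : ℝ} (hm : 1 ≤ m) {ε : ℝ} (h0 : 0 < ε) (h1 : ε < 1) :
    gfun m ε (Aval m ε) =
      (1 - ε) * (m * (1 - ε) / ε) ^ (-(1/2 : ℝ)) + ε * (m * (1 - ε) / ε) ^ (1/(2*m)) := by
  have hm0 : (0:ℝ) < m := by linarith
  have hε1 : (0:ℝ) < 1 - ε := by linarith
  set r : ℝ := m * (1 - ε) / ε with hr_def
  have hr0 : 0 < r := by positivity
  have e1 : Real.exp (Aval m ε) = r ^ (1/(2*m) : ℝ) := by
    rw [Aval, Real.rpow_def_of_pos hr0, mul_comm]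
  have e2 : Real.exp (-(m * Aval m ε)) = r ^ (-(1/2) : ℝ) := by
    rw [Aval, Real.rpow_def_of_pos hr0]
    congr 1
    field_simp
    ring
  rw [gfun, e1, e2]

lemma g_eq_phi (n : ℕ) (hn : 2 ≤ n) {ε : ℝ} (h0 : 0 < ε) (h1 : ε < 1) :
    gfun ((n:ℝ) - 1) ε (Aval ((n:ℝ) - 1) ε) = phi n ε := by
  have hm : (1:ℝ) ≤ (n:ℝ) - 1 := by
    have : (2:ℝ) ≤ n := by exact_mod_cast hn
    linarith
  set m : ℝ := (n:ℝ) - 1 with hm_def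
  have hm0 : (0:ℝ) < m := by linarith
  have hε1 : (0:ℝ) < 1 - ε := by linarith
  rw [g_rpow hm h0 h1]
  set r : ℝ := m * (1 - ε) / ε with hr_def
  have hr0 : 0 < r := by positivity
  have hrc : ∀ c : ℝ, r ^ c = m ^ c * (1-ε) ^ c * ε ^ (-c) := by
    intro c
    rw [hr_def, div_eq_mul_inv, Real.mul_rpow (by positivity) (by positivity),
      Real.mul_rpow hm0.le hε1.le, Real.inv_rpow h0.le, ← Real.rpow_neg h0.le]
  have t1 : (1 - ε) * r ^ (-(1/2) : ℝ) =
      m ^ (-(1/2) : ℝ) * ε ^ ((1:ℝ)/2) * (1-ε) ^ ((1:ℝ)/2) := by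
    rw [hrc]
    have : (1 - ε) * (1-ε) ^ (-(1/2) : ℝ) = (1-ε) ^ ((1:ℝ)/2) := by
      nth_rewrite 1 [← Real.rpow_one (1-ε)]
      rw [← Real.rpow_add hε1]
      norm_num
    rw [show -(-(1/2) : ℝ) = (1/2 : ℝ) by norm_num]
    linear_combination (m ^ (-(1/2):ℝ) * ε ^ ((1:ℝ)/2)) * this
  have t2 : ε * r ^ (1/(2*m) : ℝ) =
      m ^ (1/(2*m) : ℝ) * (1-ε) ^ (1/(2*m) : ℝ) * ε ^ (1 - 1/(2*m) : ℝ) := by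
    rw [hrc]
    have : ε * ε ^ (-(1/(2*m)) : ℝ) = ε ^ (1 - 1/(2*m) : ℝ) := by
      nth_rewrite 1 [← Real.rpow_one ε]
      rw [← Real.rpow_add h0]
      congr 1 <;> ring
    linear_combination (m ^ (1/(2*m):ℝ) * (1-ε) ^ (1/(2*m):ℝ)) * this
  rw [t1, t2, phi]

lemma phi_pos (n : ℕ) (hn : 2 ≤ n) {ε : ℝ} (h0 : 0 < ε) (h1 : ε < 1) :
    0 < phi n ε := by
  rw [← g_eq_phi n hn h0 h1, gfun]
  have h2 := Real.exp_pos (-(((n:ℝ)-1) * Aval ((n:ℝ)-1) ε))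
  have h3 := Real.exp_pos (Aval ((n:ℝ)-1) ε)
  nlinarith

lemma g_lt_one {m : ℝ} {m' : ℕ} (hm' : (m' : ℝ) = m) (hm'1 : 1 ≤ m') {ε : ℝ}
    (h0 : 0 < ε) (hub : ε < m / (m + 1)) :
    gfun m ε (Aval m ε) < 1 := by
  have hm : (1:ℝ) ≤ m := by rw [← hm']; exact_mod_cast hm'1
  have hm0 : (0:ℝ) < m := by linarith
  have hε1 : ε < 1 := lt_of_lt_of_le hub (by rw [div_le_one (by linarith)]; linarith)
  have hε1' : (0:ℝ) < 1 - ε := by linarith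
  rw [g_rpow hm h0 hε1]
  obtain ⟨r, hr_def⟩ : ∃ r : ℝ, r = m * (1 - ε) / ε := ⟨_, rfl⟩
  rw [← hr_def]
  have hr1 : 1 < r := by
    rw [hr_def, lt_div_iff₀ h0]
    have h := (lt_div_iff₀ (by linarith : (0:ℝ) < m + 1)).mp hub
    nlinarith
  have hr0 : (0:ℝ) < r := by linarith
  have hmr : (0:ℝ) < m + r := by linarith
  have hεr : ε * r = m * (1 - ε) := by
    rw [hr_def]; field_simp
  have hε_eq : ε = m / (m + r) := by
    rw [eq_div_iff (ne_of_gt hmr)]; nlinarith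
  have h1ε_eq : 1 - ε = r / (m + r) := by
    rw [eq_div_iff (ne_of_gt hmr)]; nlinarith
  have hhalf : r * r ^ (-(1/2) : ℝ) = r ^ ((1:ℝ)/2) := by
    nth_rewrite 1 [← Real.rpow_one r]
    rw [← Real.rpow_add hr0]
    norm_num
  have hkey : r ^ ((1:ℝ)/2) + m * r ^ (1/(2*m)) < m + r := by
    rw [← hm']
    exact keylt hm'1 hr1
  calc (1 - ε) * r ^ (-(1/2):ℝ) + ε * r ^ (1/(2*m) : ℝ)
      = (r ^ ((1:ℝ)/2) + m * r ^ (1/(2*m) : ℝ)) / (m + r) := by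
        rw [h1ε_eq, hε_eq, div_mul_eq_mul_div, div_mul_eq_mul_div, hhalf,
          ← add_div]
    _ < (m + r) / (m + r) := by gcongr
    _ = 1 := div_self (ne_of_gt hmr)

lemma phi_lt_one (n : ℕ) (hn : 2 ≤ n) {ε : ℝ} (h0 : 0 < ε)
    (hub : ε < ((n:ℝ) - 1) / ((n:ℝ) - 1 + 1)) :
    phi n ε < 1 := by
  have hm : (1:ℝ) ≤ (n:ℝ) - 1 := by
    have : (2:ℝ) ≤ n := by exact_mod_cast hn
    linarith
  have hε1 : ε < 1 := lt_of_lt_of_le hub (by rw [div_le_one (by linarith)]; linarith)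
  have hn1 : 1 ≤ n := le_trans (by norm_num) hn
  have hm' : ((n - 1 : ℕ) : ℝ) = (n:ℝ) - 1 := by
    rw [Nat.cast_sub hn1]; norm_num
  have hm'1 : 1 ≤ n - 1 := by omega
  rw [← g_eq_phi n hn h0 hε1]
  exact g_lt_one hm' hm'1 h0 hub

/-! ### Bookkeeping lemmas for the weight sequence -/

lemma wfac_pos [DecidableEq A] (n : ℕ) (y : P → A) (a : ℝ) (hs : P → A) (p : P) :
    0 < wfac n a hs y p := Real.exp_pos _

lemma dseq_pos [Fintype P] [Nonempty P] [DecidableEq A] (n : ℕ) (α : ℕ → ℝ)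
    (h : ℕ → P → A) (y : P → A) : ∀ s, ∀ p : P, 0 < dseq n α h y s p := by
  intro s
  induction s using Nat.strong_induction_on with
  | _ s ih =>
    match s with
    | 0 =>
      intro p
      simp only [dseq]
      have := Fintype.card_pos (α := P)
      positivity
    | 1 =>
      intro p
      simp only [dseq]
      have := Fintype.card_pos (α := P)
      positivity
    | (s + 2) =>
      intro p
      simp only [dseq]
      apply div_pos
      · exact mul_pos (ih (s+1) (by omega) p) (wfac_pos n y _ _ p)
      · exact Finset.sum_pos (fun q _ => mul_pos (ih (s+1) (by omega) q) (wfac_pos n y _ _ q))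
          Finset.univ_nonempty

lemma Zseq_pos [Fintype P] [Nonempty P] [DecidableEq A] (n : ℕ) (α : ℕ → ℝ)
    (h : ℕ → P → A) (y : P → A) (s : ℕ) : 0 < Zseq n α h y s :=
  Finset.sum_pos (fun q _ => mul_pos (dseq_pos n α h y s q) (wfac_pos n y _ _ q))
    Finset.univ_nonempty

lemma dseq_sum_one [Fintype P] [Nonempty P] [DecidableEq A] (n : ℕ) (α : ℕ → ℝ)
    (h : ℕ → P → A) (y : P → A) : ∀ s : ℕ, 1 ≤ s → ∑ p : P, dseq n α h y s p = 1 := by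
  intro s hs
  match s, hs with
  | 1, _ =>
    simp only [dseq, Finset.sum_const, Finset.card_univ, nsmul_eq_mul]
    have := Fintype.card_pos (α := P)
    field_simp
  | (s + 2), _ =>
    have hZ : (0:ℝ) < ∑ q, dseq n α h y (s+1) q * wfac n (α (s+1)) (h (s+1)) y q :=
      Zseq_pos n α h y (s+1)
    simp only [dseq]
    rw [← Finset.sum_div, div_self (ne_of_gt hZ)]

lemma prod_formula [Fintype P] [Nonempty P] [DecidableEq A] (n : ℕ) (α : ℕ → ℝ)
    (h : ℕ → P → A) (y : P → A) : ∀ k : ℕ, ∀ p : P,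
    dseq n α h y (k+1) p * ∏ s ∈ Finset.Icc 1 k, Zseq n α h y s =
      1 / (Fintype.card P : ℝ) * ∏ s ∈ Finset.Icc 1 k, wfac n (α s) (h s) y p := by
  intro k
  induction k with
  | zero => intro p; simp [dseq]
  | succ k ih =>
    intro p
    rw [Finset.prod_Icc_succ_top (by omega : 1 ≤ k + 1),
      Finset.prod_Icc_succ_top (by omega : 1 ≤ k + 1)]
    have hZ : Zseq n α h y (k+1) ≠ 0 := ne_of_gt (Zseq_pos n α h y (k+1))
    have hd : dseq n α h y (k+1+1) p =
        dseq n α h y (k+1) p * wfac n (α (k+1)) (h (k+1)) y p / Zseq n α h y (k+1) := rfl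
    rw [hd]
    have ih' : (Fintype.card P : ℝ) * (dseq n α h y (k+1) p * ∏ s ∈ Finset.Icc 1 k, Zseq n α h y s) =
        ∏ s ∈ Finset.Icc 1 k, wfac n (α s) (h s) y p := by
      rw [ih p]
      have : (Fintype.card P : ℝ) ≠ 0 := by
        have := Fintype.card_pos (α := P); positivity
      field_simp
    field_simp
    linear_combination (wfac n (α (k+1)) (h (k+1)) y p) * ih'

lemma Psi_sum [Fintype A] [DecidableEq A] (α : ℕ → ℝ) (h : ℕ → P → A) (y : P → A)
    (k : ℕ) (p : P) :
    Psi α h k (y p) p = ∑ s ∈ Finset.Icc 1 k,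
      α s * (((Fintype.card A : ℝ) - 1) * (if h s p = y p then 1 else 0) -
        (if h s p = y p then 0 else 1)) := by
  rw [Psi, Fsc]
  have e1 : ∑ a' ∈ Finset.univ.erase (y p), Fsc α h k a' p =
      ∑ s ∈ Finset.Icc 1 k, α s * (if h s p = y p then 0 else 1) := by
    simp only [Fsc]
    rw [Finset.sum_comm]
    apply Finset.sum_congr rfl
    intro s _
    rw [← Finset.mul_sum]
    congr 1
    by_cases hc : h s p = y p
    · simp [Finset.sum_ite_eq, hc]
    · simp [Finset.sum_ite_eq, hc]
  rw [e1, Finset.mul_sum, ← Finset.sum_sub_distrib]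
  apply Finset.sum_congr rfl
  intro s _
  ring

lemma prod_wfac_eq [Fintype P] [Fintype A] [DecidableEq A] (α : ℕ → ℝ) (h : ℕ → P → A)
    (y : P → A) (k : ℕ) (p : P) :
    ∏ s ∈ Finset.Icc 1 k, wfac (Fintype.card A) (α s) (h s) y p =
      Real.exp (-(Psi α h k (y p) p)) := by
  rw [Psi_sum, ← Finset.sum_neg_distrib, Real.exp_sum]
  apply Finset.prod_congr rfl
  intro s _
  rfl

lemma Zseq_eq_gfun [Fintype P] [Nonempty P] [DecidableEq A] (n : ℕ) (α : ℕ → ℝ)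
    (h : ℕ → P → A) (y : P → A) (s : ℕ) (hs : 1 ≤ s) :
    Zseq n α h y s = gfun ((n:ℝ) - 1) (err n α h y s) (α s) := by
  rw [Zseq, ← Finset.sum_filter_add_sum_filter_not Finset.univ (fun p => h s p ≠ y p)]
  have hA : ∑ q ∈ Finset.univ.filter (fun p => h s p ≠ y p),
      dseq n α h y s q * wfac n (α s) (h s) y q =
      err n α h y s * Real.exp (α s) := by
    rw [err, Finset.sum_mul]
    apply Finset.sum_congr rfl
    intro q hq
    rw [Finset.mem_filter] at hq
    rw [wfac, if_neg hq.2, if_neg hq.2]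
    congr 1
    ring
  have hB : ∑ q ∈ Finset.univ.filter (fun p => ¬ (h s p ≠ y p)),
      dseq n α h y s q * wfac n (α s) (h s) y q =
      (1 - err n α h y s) * Real.exp (-(((n:ℝ) - 1) * α s)) := by
    have hsum : ∑ q ∈ Finset.univ.filter (fun p => ¬ (h s p ≠ y p)), dseq n α h y s q =
        1 - err n α h y s := by
      have htot := dseq_sum_one n α h y s hs
      rw [← Finset.sum_filter_add_sum_filter_not Finset.univ (fun p => h s p ≠ y p)] at htot
      rw [err]
      linarith [htot]
    rw [← hsum, Finset.sum_mul]
    apply Finset.sum_congr rfl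
    intro q hq
    rw [Finset.mem_filter] at hq
    have hq2 : h s q = y q := not_not.mp hq.2
    rw [wfac, if_pos hq2, if_pos hq2]
    congr 1
    ring
  rw [hA, hB, gfun]
  ring

/-- under the weak-learnability error bounds and the SAMME-type choice of
`α_s`, the exponential rate `ρ := −log φ(1−1/n−γ)` is positive and the `d_1`-mass of points
whose correct label has nonpositive score `Ψ^k` is at most `e^{−ρ k}`. -/
theorem stmt0 [Fintype P] [Nonempty P] [Fintype A] [DecidableEq A]
    (hn : 2 ≤ Fintype.card A)
    (α : ℕ → ℝ) (h : ℕ → P → A) (y : P → A)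
    (k : ℕ) (hk : 1 ≤ k)
    (γ : ℝ) (hγ : γ ∈ Set.Ioo (0 : ℝ) (1 - 1 / (Fintype.card A : ℝ)))
    (hε : ∀ s ∈ Finset.Icc 1 k,
      0 < err (Fintype.card A) α h y s ∧
        err (Fintype.card A) α h y s ≤ 1 - 1 / (Fintype.card A : ℝ) - γ)
    (hα : ∀ s ∈ Finset.Icc 1 k,
      α s = 1 / (2 * ((Fintype.card A : ℝ) - 1)) *
        Real.log (((Fintype.card A : ℝ) - 1) * (1 - err (Fintype.card A) α h y s) /
          err (Fintype.card A) α h y s)) :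
    0 < -Real.log (phi (Fintype.card A) (1 - 1 / (Fintype.card A : ℝ) - γ)) ∧
      ∑ p ∈ Finset.univ.filter (fun p => Psi α h k (y p) p ≤ 0),
          dseq (Fintype.card A) α h y 1 p ≤
        Real.exp (-(-Real.log (phi (Fintype.card A) (1 - 1 / (Fintype.card A : ℝ) - γ)) * k)) := by
  classical
  set n : ℕ := Fintype.card A with hn_def
  have hn2 : (2:ℝ) ≤ (n:ℝ) := by exact_mod_cast hn
  have hm : (1:ℝ) ≤ (n:ℝ) - 1 := by linarith
  have hn0 : (0:ℝ) < (n:ℝ) := by linarith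
  set εb : ℝ := 1 - 1 / (n:ℝ) - γ with hεb_def
  obtain ⟨hγ0, hγ1⟩ := hγ
  have hεb0 : 0 < εb := by rw [hεb_def]; linarith
  have hdiv : ((n:ℝ) - 1) / ((n:ℝ) - 1 + 1) = 1 - 1 / (n:ℝ) := by
    field_simp
    ring
  have hεb_ub : εb < ((n:ℝ) - 1) / ((n:ℝ) - 1 + 1) := by
    rw [hdiv, hεb_def]; linarith
  have hεb1 : εb < 1 := by
    have h1n : 0 < 1 / (n:ℝ) := by positivity
    rw [hεb_def]; linarith
  have hφpos : 0 < phi n εb := phi_pos n hn hεb0 hεb1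
  have hφlt : phi n εb < 1 := phi_lt_one n hn hεb0 hεb_ub
  have hρ : 0 < -Real.log (phi n εb) := by
    have := Real.log_neg hφpos hφlt
    linarith
  refine ⟨hρ, ?_⟩
  -- each Z_s is at most phi n εb
  have hZle : ∀ s ∈ Finset.Icc 1 k, Zseq n α h y s ≤ phi n εb := by
    intro s hs
    have hs1 : 1 ≤ s := (Finset.mem_Icc.mp hs).1
    obtain ⟨hε0s, hεles⟩ := hε s hs
    have hαs : α s = Aval ((n:ℝ) - 1) (err n α h y s) := by
      rw [Aval]
      exact hα s hs
    rw [Zseq_eq_gfun n α h y s hs1, hαs]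
    calc gfun ((n:ℝ)-1) (err n α h y s) (Aval ((n:ℝ)-1) (err n α h y s))
        ≤ gfun ((n:ℝ)-1) εb (Aval ((n:ℝ)-1) εb) := by
          apply g_mono hm hε0s _ hεb_ub
          rw [hεb_def]; exact hεles
      _ = phi n εb := g_eq_phi n hn hεb0 hεb1
  -- the sum is at most the product of the Z_s
  have hprod : ∑ p ∈ Finset.univ.filter (fun p => Psi α h k (y p) p ≤ 0),
      dseq n α h y 1 p ≤ ∏ s ∈ Finset.Icc 1 k, Zseq n α h y s := by
    have hd1 : ∀ p : P, dseq n α h y 1 p = 1 / (Fintype.card P : ℝ) := fun p => rfl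
    calc ∑ p ∈ Finset.univ.filter (fun p => Psi α h k (y p) p ≤ 0), dseq n α h y 1 p
        ≤ ∑ p ∈ Finset.univ.filter (fun p => Psi α h k (y p) p ≤ 0),
            dseq n α h y 1 p * Real.exp (-(Psi α h k (y p) p)) := by
          apply Finset.sum_le_sum
          intro p hp
          rw [Finset.mem_filter] at hp
          have h1 : (1:ℝ) ≤ Real.exp (-(Psi α h k (y p) p)) := by
            rw [← Real.exp_zero]
            exact Real.exp_le_exp.mpr (by linarith [hp.2])
          nlinarith [dseq_pos n α h y 1 p, h1]
      _ ≤ ∑ p : P, dseq n α h y 1 p * Real.exp (-(Psi α h k (y p) p)) := by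
          apply Finset.sum_le_sum_of_subset_of_nonneg (Finset.filter_subset _ _)
          intro p _ _
          exact le_of_lt (mul_pos (dseq_pos n α h y 1 p) (Real.exp_pos _))
      _ = ∑ p : P, dseq n α h y (k+1) p * ∏ s ∈ Finset.Icc 1 k, Zseq n α h y s := by
          apply Finset.sum_congr rfl
          intro p _
          rw [prod_formula n α h y k p, ← prod_wfac_eq α h y k p, hd1 p]
      _ = (∑ p : P, dseq n α h y (k+1) p) * ∏ s ∈ Finset.Icc 1 k, Zseq n α h y s := by
          rw [Finset.sum_mul]
      _ = ∏ s ∈ Finset.Icc 1 k, Zseq n α h y s := by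
          rw [dseq_sum_one n α h y (k+1) (by omega), one_mul]
  -- the product is at most phi^k which is the claimed exponential
  have hpow : ∏ s ∈ Finset.Icc 1 k, Zseq n α h y s ≤ phi n εb ^ k := by
    calc ∏ s ∈ Finset.Icc 1 k, Zseq n α h y s
        ≤ ∏ s ∈ Finset.Icc 1 k, phi n εb :=
          Finset.prod_le_prod (fun s _ => (Zseq_pos n α h y s).le) hZle
      _ = phi n εb ^ k := by
          rw [Finset.prod_const, Nat.card_Icc]
          norm_num
  have hexp : Real.exp (-(-Real.log (phi n εb) * k)) = phi n εb ^ k := by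
    rw [show -(-Real.log (phi n εb) * (k:ℝ)) = (k:ℝ) * Real.log (phi n εb) by ring,
      Real.exp_nat_mul, Real.exp_log hφpos]
  rw [hexp]
  exact le_trans hprod hpow

end
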